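/- Let φ act on words x of length k over {0,...,m-1} as follows: form the extended word of length (k+1)m given by x·(m-1)·(x-1)·(m-2)·...·(x-m+1)·0 (each block is x with i subtracted mod m followed by m-1-i), rotate it cyclically left so that its leftmost 0 becomes the last character, and take the first k letters of the result. Then φ^{k+1} is the identity on the set of all m^k words of length k. -/

import Mathlib

/-- The extended word `x̄ = (x)(m-1)(x-1)(m-2)⋯(x-m+1)(0)` of a word `x` of length
`k` over `ℤ/mℤ`: the concatenation of the blocks `(x - i)(m-1-i)` for `i = 0,…,m-1`. -/
def extWord (m k : ℕ) (x : Fin k → ZMod m) : List (ZMod m) :=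
  (List.range m).flatMap
    (fun (i : ℕ) => (List.ofFn x).map (fun a => a - (i : ZMod m)) ++ [((m - 1 - i : ℕ) : ZMod m)])

/-- The cyclic action `φ`: rotate the extended word left so that its leftmost `0`
becomes the last character, and take the first `k` letters. -/
def phi (m k : ℕ) (x : Fin k → ZMod m) : Fin k → ZMod m :=
  fun j => ((extWord m k x).rotate ((extWord m k x).idxOf 0 + 1)).getD (j : ℕ) 0

namespace PhiOrder

open List

/-- The "abstract" extended word of a seed word `w` of length `k+1`. -/
def extAux (m : ℕ) (w : List (ZMod m)) : List (ZMod m) :=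
  (List.range m).flatMap (fun (i : ℕ) => w.map (fun a => a - (i : ZMod m)))

lemma flatMap_congr {α β : Type*} {l : List α} {f g : α → List β}
    (h : ∀ i ∈ l, f i = g i) : l.flatMap f = l.flatMap g := by
  induction l with
  | nil => rfl
  | cons a l ih =>
    simp only [flatMap_cons, h a mem_cons_self,
      ih (fun i hi => h i (mem_cons_of_mem a hi))]

lemma extWord_eq (m k : ℕ) (hm : 1 ≤ m) (x : Fin k → ZMod m) :
    extWord m k x = extAux m (List.ofFn x ++ [((m - 1 : ℕ) : ZMod m)]) := by
  unfold extWord extAux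
  refine flatMap_congr fun i hi => ?_
  rw [mem_range] at hi
  have h1 : i ≤ m - 1 := Nat.le_sub_one_of_lt hi
  rw [map_append]
  simp [Nat.cast_sub h1]

lemma extAux_length (m : ℕ) (w : List (ZMod m)) :
    (extAux m w).length = m * w.length := by
  simp [extAux, length_flatMap, Function.comp_def, map_const', sum_replicate,
    smul_eq_mul]

/-- Decomposition of `extAux` pulling off the first block. -/
lemma extAux_cons (m' : ℕ) (w : List (ZMod (m' + 1))) :
    extAux (m' + 1) w
      = w ++ (List.range m').flatMap
          (fun i => w.map (fun a => a - ((i + 1 : ℕ) : ZMod (m' + 1)))) := by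
  unfold extAux
  rw [List.range_succ_eq_map, flatMap_cons, flatMap_map]
  simp [Nat.succ_eq_add_one]

/-- Decomposition of `extAux` pulling off the last block. -/
lemma extAux_concat (m' : ℕ) (w : List (ZMod (m' + 1))) :
    extAux (m' + 1) w
      = (List.range m').flatMap (fun (i : ℕ) => w.map (fun a => a - (i : ZMod (m' + 1))))
        ++ w.map (fun a => a - ((m' : ℕ) : ZMod (m' + 1))) := by
  unfold extAux
  rw [List.range_succ, flatMap_append]
  simp

/-- Rotating `extAux w` by `w.length` subtracts one from every letter of the seed. -/
lemma extAux_rotate (m : ℕ) (hm : 1 ≤ m) (w : List (ZMod m)) :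
    (extAux m w).rotate w.length = extAux m (w.map (fun a => a - 1)) := by
  obtain ⟨m', rfl⟩ : ∃ m', m = m' + 1 :=
    ⟨m - 1, (Nat.succ_pred_eq_of_pos hm).symm⟩
  have h1 : (extAux (m' + 1) w).rotate w.length
      = (List.range m').flatMap
          (fun i => w.map (fun a => a - ((i + 1 : ℕ) : ZMod (m' + 1)))) ++ w := by
    rw [extAux_cons, rotate_eq_drop_append_take (by simp), drop_left, take_left]
  have hR : extAux (m' + 1) (w.map (fun a => a - 1))
      = (List.range m').flatMap
          (fun (i : ℕ) => w.map (fun a => a - 1 - (i : ZMod (m' + 1))))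
        ++ w.map (fun a => a - 1 - ((m' : ℕ) : ZMod (m' + 1))) := by
    rw [extAux_concat]
    simp [map_map, Function.comp_def]
  have hmc : ((m' : ℕ) : ZMod (m' + 1)) + 1 = 0 := by
    have h := ZMod.natCast_self (m' + 1)
    push_cast at h
    exact h
  rw [h1, hR]
  congr 1
  · refine flatMap_congr fun i hi => map_congr_left fun a _ => ?_
    push_cast
    ring
  · symm
    calc w.map (fun a => a - 1 - ((m' : ℕ) : ZMod (m' + 1)))
        = w.map (fun a => a) := by
          refine map_congr_left fun a _ => ?_
          calc a - 1 - ((m' : ℕ) : ZMod (m' + 1))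
              = a - (((m' : ℕ) : ZMod (m' + 1)) + 1) := by ring
            _ = a := by rw [hmc, sub_zero]
      _ = w := map_id' w

/-- The core induction: a word satisfying the shifted-concatenation equation
is a concatenation of iterates. -/
lemma helper {α : Type*} (f : α → α) :
    ∀ (c : ℕ) (u v t : List α), t.length = u.length → v.length = c * u.length →
      v ++ t = u.map f ++ v.map f →
      v = (List.range c).flatMap (fun i => u.map (f^[i + 1])) := by
  intro c
  induction c with
  | zero =>
    intro u v t ht hv he
    simp only [Nat.zero_mul] at hv
    have hvnil : v = [] := List.eq_nil_of_length_eq_zero hv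
    simp [hvnil]
  | succ c ih =>
    intro u v t ht hv he
    have hqv : u.length ≤ v.length := by rw [hv]; nlinarith
    have htake : v.take u.length = u.map f := by
      have h := congrArg (List.take u.length) he
      rw [take_append_of_le_length hqv] at h
      have h2 : List.take u.length (u.map f ++ v.map f) = u.map f := by
        rw [show u.length = (u.map f).length from (length_map (as := u) f).symm, take_left]
      exact h.trans h2
    have hsplit : v = v.take u.length ++ v.drop u.length :=
      (take_append_drop u.length v).symm
    have he2 : v.drop u.length ++ t
        = (u.map f).map f ++ (v.drop u.length).map f := by
      refine append_cancel_left (as := u.map f) ?_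
      calc u.map f ++ (v.drop u.length ++ t)
          = (v.take u.length ++ v.drop u.length) ++ t := by
            rw [htake, append_assoc]
        _ = u.map f ++ v.map f := by rw [take_append_drop, he]
        _ = u.map f ++ ((v.take u.length ++ v.drop u.length).map f) := by
            rw [take_append_drop]
        _ = u.map f ++ ((v.take u.length).map f ++ (v.drop u.length).map f) := by
            rw [map_append]
        _ = u.map f ++ ((u.map f).map f ++ (v.drop u.length).map f) := by
            rw [htake]
    have hlen2 : (v.drop u.length).length = c * (u.map f).length := by
      rw [length_drop, length_map, hv, Nat.succ_mul, Nat.add_sub_cancel]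
    have hrec := ih (u.map f) (v.drop u.length) t (by simpa using ht) hlen2 he2
    rw [List.range_succ_eq_map, flatMap_cons, flatMap_map]
    have h1 : u.map (f^[0 + 1]) = u.map f := by simp
    rw [h1, hsplit, htake, hrec]
    congr 1
    refine flatMap_congr fun i hi => ?_
    rw [map_map]
    refine map_congr_left fun a _ => ?_
    show f^[i + 1] (f a) = f^[Nat.succ i + 1] a
    simp only [Nat.succ_eq_add_one, Function.iterate_succ_apply]

lemma subIter (m : ℕ) : ∀ (i : ℕ) (a : ZMod m),
    (fun a : ZMod m => a - 1)^[i] a = a - (i : ℕ) := by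
  intro i
  induction i with
  | zero => simp
  | succ i ih =>
    intro a
    rw [Function.iterate_succ_apply', ih]
    push_cast
    ring

/-- Reconstruction: a word of length `m·n` whose rotation by `n` equals
subtracting one is the `extAux` of its first `n` letters. -/
lemma recon (m n : ℕ) (hm : 1 ≤ m) (w : List (ZMod m))
    (hlen : w.length = m * n)
    (hrot : w.rotate n = w.map (fun a => a - 1)) :
    w = extAux m (w.take n) := by
  obtain ⟨m', rfl⟩ : ∃ m', m = m' + 1 :=
    ⟨m - 1, (Nat.succ_pred_eq_of_pos hm).symm⟩
  have hnw : n ≤ w.length := by rw [hlen]; nlinarith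
  have htlen : (w.take n).length = n := by simp [hnw]
  have hrot2 : w.drop n ++ w.take n = (w.take n).map (fun a => a - 1)
      ++ (w.drop n).map (fun a => a - 1) := by
    rw [← map_append, take_append_drop, ← hrot, rotate_eq_drop_append_take hnw]
  have hdlen : (w.drop n).length = m' * (w.take n).length := by
    rw [length_drop, length_take, Nat.min_eq_left hnw, hlen, Nat.succ_mul,
      Nat.add_sub_cancel]
  have hv := helper (fun a : ZMod (m' + 1) => a - 1) m' (w.take n) (w.drop n)
    (w.take n) rfl hdlen hrot2
  rw [extAux_cons]
  conv_lhs => rw [← take_append_drop n w]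
  congr 1
  rw [hv]
  refine flatMap_congr fun i hi => ?_
  refine map_congr_left fun a _ => ?_
  rw [subIter]

lemma sum_count (m : ℕ) (hm : 1 ≤ m) (w : List (ZMod m)) :
    ∑ i ∈ Finset.range m, w.count ((i : ℕ) : ZMod m) = w.length := by
  haveI : NeZero m := ⟨by omega⟩
  induction w with
  | nil => simp
  | cons a l ih =>
    simp only [List.count_cons, Finset.sum_add_distrib, ih, length_cons]
    congr 1
    have : ∀ i ∈ Finset.range m,
        (if (a == ((i : ℕ) : ZMod m)) = true then 1 else 0)
          = if i = a.val then 1 else 0 := by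
      intro i hi
      rw [Finset.mem_range] at hi
      congr 1
      simp only [beq_iff_eq, eq_iff_iff]
      constructor
      · intro h; rw [h, ZMod.val_cast_of_lt hi]
      · rintro rfl; exact (ZMod.natCast_rightInverse a).symm
    rw [Finset.sum_congr rfl this, Finset.sum_ite_eq' (Finset.range m) a.val
      (fun _ => 1), if_pos (Finset.mem_range.2 (ZMod.val_lt a))]

lemma count_flatMap {α β : Type*} [BEq β] (g : α → List β) (a : β) :
    ∀ l : List α, (l.flatMap g).count a = (l.map (fun i => (g i).count a)).sum := by
  intro l
  induction l with
  | nil => simp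
  | cons b l ih => simp [flatMap_cons, count_append, ih]

lemma list_sum_range_eq (f : ℕ → ℕ) : ∀ n : ℕ,
    ((List.range n).map f).sum = ∑ i ∈ Finset.range n, f i := by
  intro n
  induction n with
  | zero => simp
  | succ n ih => simp [List.range_succ, Finset.sum_range_succ, ih]

lemma extAux_count (m : ℕ) (hm : 1 ≤ m) (w : List (ZMod m)) :
    (extAux m w).count 0 = w.length := by
  unfold extAux
  rw [count_flatMap]
  have h : ∀ i : ℕ, (w.map (fun a => a - (i : ZMod m))).count 0
      = w.count ((i : ℕ) : ZMod m) := by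
    intro i
    have hinj : Function.Injective (fun a : ZMod m => a - (i : ZMod m)) :=
      fun a b h => by simpa using sub_left_injective h
    have := List.count_map_of_injective w (fun a : ZMod m => a - (i : ZMod m))
      hinj ((i : ℕ) : ZMod m)
    simpa using this
  simp only [h]
  rw [list_sum_range_eq, sum_count m hm]

/-- `extAux` commutes with subtracting one letterwise. -/
lemma extAux_map (m : ℕ) (w : List (ZMod m)) :
    (extAux m w).map (fun a => a - 1) = extAux m (w.map (fun a => a - 1)) := by
  unfold extAux
  rw [map_flatMap]
  refine flatMap_congr fun i hi => ?_
  rw [map_map, map_map]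
  refine map_congr_left fun a _ => ?_
  show a - (i : ZMod m) - 1 = a - 1 - (i : ZMod m)
  ring

lemma extAux_getD_last (m : ℕ) (hm : 1 ≤ m) (w : List (ZMod m)) (n : ℕ)
    (hn : w.length = n) (hn1 : 1 ≤ n) :
    (extAux m w).getD (m * n - 1) 0 = w.getD (n - 1) 0 - ((m - 1 : ℕ) : ZMod m) := by
  obtain ⟨m', rfl⟩ : ∃ m', m = m' + 1 :=
    ⟨m - 1, (Nat.succ_pred_eq_of_pos hm).symm⟩
  rw [extAux_concat]
  have hA : ((List.range m').flatMap
      (fun (i : ℕ) => w.map (fun a => a - (i : ZMod (m' + 1))))).length = m' * n := by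
    simp [length_flatMap, Function.comp_def, map_const', sum_replicate, hn,
      smul_eq_mul]
  have hBlen : (w.map (fun a => a - ((m' : ℕ) : ZMod (m' + 1)))).length = n := by
    simp [hn]
  have hjlt : (m' + 1) * n - 1 < ((List.range m').flatMap
      (fun (i : ℕ) => w.map (fun a => a - (i : ZMod (m' + 1))))).length
        + (w.map (fun a => a - ((m' : ℕ) : ZMod (m' + 1)))).length := by
    rw [hA, hBlen, Nat.succ_mul]; omega
  rw [getD_eq_getElem _ _ (by simpa using hjlt)]
  rw [getElem_append_right (by rw [hA, Nat.succ_mul]; omega)]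
  have hidx : (m' + 1) * n - 1 - ((List.range m').flatMap
      (fun (i : ℕ) => w.map (fun a => a - (i : ZMod (m' + 1))))).length = n - 1 := by
    rw [hA, Nat.succ_mul]; omega
  have hn1' : n - 1 < w.length := by omega
  simp only [hidx]
  rw [getElem_map, getD_eq_getElem _ _ hn1']
  simp

lemma extWord_getD (m k : ℕ) (hm : 1 ≤ m) (y : Fin k → ZMod m) (j : ℕ)
    (hj : j < k) : (extWord m k y).getD j 0 = y ⟨j, hj⟩ := by
  obtain ⟨m', rfl⟩ : ∃ m', m = m' + 1 :=
    ⟨m - 1, (Nat.succ_pred_eq_of_pos hm).symm⟩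
  rw [extWord_eq _ _ hm, extAux_cons]
  have h1 : j < (List.ofFn y ++ [(((m' + 1) - 1 : ℕ) : ZMod (m' + 1))]).length := by
    simp; omega
  rw [getD_eq_getElem _ _ (by rw [length_append]; omega),
    getElem_append_left h1, getElem_append_left (by simp [hj]), List.getElem_ofFn]

lemma extWord_count (m k : ℕ) (hm : 1 ≤ m) (y : Fin k → ZMod m) :
    (extWord m k y).count 0 = k + 1 := by
  rw [extWord_eq _ _ hm, extAux_count _ hm]
  simp

lemma extWord_length (m k : ℕ) (hm : 1 ≤ m) (y : Fin k → ZMod m) :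
    (extWord m k y).length = m * (k + 1) := by
  rw [extWord_eq _ _ hm, extAux_length]
  simp

lemma extWord_getD_last (m k : ℕ) (hm : 1 ≤ m) (y : Fin k → ZMod m) :
    (extWord m k y).getD (m * (k + 1) - 1) 0 = 0 := by
  rw [extWord_eq _ _ hm,
    extAux_getD_last m hm _ (k + 1) (by simp) (by omega)]
  have : (List.ofFn y ++ [((m - 1 : ℕ) : ZMod m)]).getD (k + 1 - 1) 0
      = ((m - 1 : ℕ) : ZMod m) := by
    rw [getD_eq_getElem _ _ (by simp),
      getElem_append_right (by simp)]
    simp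
  rw [this, sub_self]

/-- The key step: applying `φ` rotates the extended word past its leftmost zero. -/
lemma key (m k : ℕ) (hm : 1 ≤ m) (y : Fin k → ZMod m) :
    extWord m k (phi m k y)
      = (extWord m k y).rotate ((extWord m k y).idxOf 0 + 1) := by
  set E := extWord m k y with hE
  set p := E.idxOf 0 with hp
  set R := E.rotate (p + 1) with hR
  have hElen : E.length = m * (k + 1) := extWord_length m k hm y
  have hL1 : 1 ≤ m * (k + 1) := by nlinarith
  have hmem : (0 : ZMod m) ∈ E := by
    rw [← count_pos_iff, extWord_count m k hm]; omega
  have hpl : p < E.length := idxOf_lt_length_iff.2 hmem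
  have hRlen : R.length = m * (k + 1) := by rw [hR, length_rotate, hElen]
  have hwlen : (List.ofFn y ++ [((m - 1 : ℕ) : ZMod m)]).length = k + 1 := by simp
  have hErot : E.rotate (k + 1) = E.map (fun a => a - 1) := by
    conv_lhs => rw [hE, extWord_eq _ _ hm, ← hwlen, extAux_rotate m hm]
    rw [← extAux_map, ← extWord_eq _ _ hm, ← hE]
  have hRrot : R.rotate (k + 1) = R.map (fun a => a - 1) := by
    rw [hR, rotate_rotate, add_comm (p + 1) (k + 1), ← rotate_rotate, hErot,
      map_rotate]
  have hrecon : R = extAux m (R.take (k + 1)) := recon m (k + 1) hm R hRlen hRrot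
  have htlen : (R.take (k + 1)).length = k + 1 := by
    rw [length_take, hRlen, Nat.min_eq_left (by nlinarith)]
  have hRlast : R.getD (m * (k + 1) - 1) 0 = 0 := by
    rw [hR, getD_eq_getElem _ _ (by rw [length_rotate, hElen]; omega),
      List.getElem_rotate]
    have harith : (m * (k + 1) - 1 + (p + 1)) % E.length = p := by
      rw [hElen, show m * (k + 1) - 1 + (p + 1) = m * (k + 1) + p by omega,
        Nat.add_mod_left, Nat.mod_eq_of_lt (by omega : p < m * (k + 1))]
    simp only [harith]
    exact getElem_idxOf (by omega)
  have hlast2 : (R.take (k + 1)).getD k 0 = ((m - 1 : ℕ) : ZMod m) := by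
    have h := hRlast
    rw [hrecon, extAux_getD_last m hm _ (k + 1) htlen (by omega)] at h
    have := eq_of_sub_eq_zero h
    simpa using this
  have htval : R.take (k + 1)
      = List.ofFn (phi m k y) ++ [((m - 1 : ℕ) : ZMod m)] := by
    refine ext_getElem (by simp [htlen]) fun j h1 h2 => ?_
    rcases Nat.lt_or_ge j k with hj | hj
    · rw [getElem_take, getElem_append_left (by simp [hj]), List.getElem_ofFn]
      exact ((getD_eq_getElem R 0 (by
        rw [hRlen]
        exact Nat.lt_of_lt_of_le (by omega : j < k + 1)
          (by nlinarith : k + 1 ≤ m * (k + 1)))).symm)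
    · have hjk : j = k := by rw [htlen] at h1; omega
      subst hjk
      have h3 := hlast2
      rw [getD_eq_getElem _ _ (by omega)] at h3
      rw [h3, getElem_append_right (by simp)]
      simp
  calc extWord m k (phi m k y)
      = extAux m (List.ofFn (phi m k y) ++ [((m - 1 : ℕ) : ZMod m)]) :=
        extWord_eq m k hm _
    _ = extAux m (R.take (k + 1)) := by rw [htval]
    _ = R := hrecon.symm

end PhiOrder

open PhiOrder

theorem phi_order (m k : ℕ) (hm : 1 ≤ m) (hk : 1 ≤ k) (x : Fin k → ZMod m) :
    (phi m k)^[k + 1] x = x := by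
  have hElen : (extWord m k x).length = m * (k + 1) := extWord_length m k hm x
  have hcntE : (extWord m k x).count 0 = k + 1 := extWord_count m k hm x
  have hL1 : k + 1 ≤ m * (k + 1) := by nlinarith
  have main : ∀ t : ℕ, t ≤ k + 1 → ∃ s : ℕ, s ≤ m * (k + 1) ∧
      extWord m k ((phi m k)^[t] x) = (extWord m k x).rotate s ∧
      ((extWord m k x).take s).count 0 = t := by
    intro t
    induction t with
    | zero => exact fun _ => ⟨0, Nat.zero_le _, by simp, by simp⟩
    | succ t ih =>
      intro htn
      obtain ⟨s, hsL, hext, hcnt⟩ := ih (by omega)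
      set y := (phi m k)^[t] x with hy
      set Ey := extWord m k y with hEy
      have hEylen : Ey.length = m * (k + 1) := extWord_length m k hm y
      have hmemy : (0 : ZMod m) ∈ Ey := by
        rw [← List.count_pos_iff, hEy, extWord_count m k hm]; omega
      set p := Ey.idxOf 0 with hp
      have hpl : p < m * (k + 1) := by
        rw [← hEylen]; exact List.idxOf_lt_length_iff.2 hmemy
      have hsl : s < m * (k + 1) := by
        rcases Nat.lt_or_ge s (m * (k + 1)) with h | h
        · exact h
        · exfalso
          rw [List.take_of_length_le (by rw [hElen]; omega)] at hcnt
          omega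
      have hlastE' : (extWord m k x).getD (m * (k + 1) - 1) 0 = 0 :=
        extWord_getD_last m k hm x
      have hlastE : (extWord m k x)[m * (k + 1) - 1]'(by rw [hElen]; omega)
          = 0 := by
        rw [List.getD_eq_getElem _ _ (by rw [hElen]; omega)] at hlastE'
        exact hlastE'
      have hplast : p + 1 ≤ m * (k + 1) - s := by
        by_contra hcon
        push_neg at hcon
        have hi : m * (k + 1) - 1 - s < p := by omega
        have hidx : m * (k + 1) - 1 - s < Ey.length := by rw [hEylen]; omega
        have h1 : Ey.getD (m * (k + 1) - 1 - s) 0 = 0 := by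
          rw [hext, List.getD_eq_getElem _ _
            (by rw [List.length_rotate, hElen]; omega), List.getElem_rotate]
          have harith : (m * (k + 1) - 1 - s + s) % (extWord m k x).length
              = m * (k + 1) - 1 := by
            rw [hElen, show m * (k + 1) - 1 - s + s = m * (k + 1) - 1 by omega,
              Nat.mod_eq_of_lt (by omega)]
          simp only [harith]
          exact hlastE
        rw [List.getD_eq_getElem _ _ hidx] at h1
        have h2 := List.not_of_lt_findIdx
          (show m * (k + 1) - 1 - s < List.findIdx (· == (0 : ZMod m)) Ey from hi)
        simp [h1] at h2
      refine ⟨s + (p + 1), by omega, ?_, ?_⟩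
      · rw [Function.iterate_succ_apply', ← hy, key m k hm y, ← hEy, ← hp, hext,
          List.rotate_rotate]
      · rw [List.take_add, List.count_append, hcnt]
        have hdt : List.take (p + 1) (List.drop s (extWord m k x))
            = List.take (p + 1) Ey := by
          rw [hext, List.rotate_eq_drop_append_take (by rw [hElen]; omega),
            List.take_append_of_le_length (by rw [List.length_drop, hElen]; omega)]
        rw [hdt]
        have h1 : List.take (p + 1) Ey = List.take p Ey ++ [(0 : ZMod m)] := by
          rw [List.take_succ, List.getElem?_eq_getElem (by rw [hEylen]; omega)]
          congr 1
          rw [List.getElem_idxOf (by rw [hEylen]; omega)]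
          rfl
        rw [h1, List.count_append]
        have h2 : (List.take p Ey).count 0 = 0 := by
          rw [List.count_eq_zero]
          intro hmem0
          rw [List.mem_take_iff_getElem] at hmem0
          obtain ⟨i, hilt, hi0⟩ := hmem0
          have hip : i < p := lt_of_lt_of_le hilt (min_le_left _ _)
          have h3 := List.not_of_lt_findIdx
            (show i < List.findIdx (· == (0 : ZMod m)) Ey from hip)
          simp [hi0] at h3
        rw [h2]
        simp
  obtain ⟨s, hsL, hext, hcnt⟩ := main (k + 1) le_rfl
  have hsL2 : s = m * (k + 1) := by
    by_contra hne
    have hs : s < m * (k + 1) := lt_of_le_of_ne hsL hne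
    have hmemd : (0 : ZMod m) ∈ (extWord m k x).drop s := by
      have hlt : m * (k + 1) - 1 - s < ((extWord m k x).drop s).length := by
        rw [List.length_drop, hElen]; omega
      have hval : ((extWord m k x).drop s)[m * (k + 1) - 1 - s]'hlt = 0 := by
        rw [List.getElem_drop]
        have h2 := extWord_getD_last m k hm x
        rw [List.getD_eq_getElem _ _ (by rw [hElen]; omega)] at h2
        convert h2 using 2
        omega
      exact hval ▸ List.getElem_mem _
    have hdpos : 0 < ((extWord m k x).drop s).count 0 :=
      List.count_pos_iff.2 hmemd
    have hsum : (extWord m k x).count 0 = ((extWord m k x).take s).count 0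
        + ((extWord m k x).drop s).count 0 := by
      rw [← List.count_append, List.take_append_drop]
    omega
  rw [hsL2] at hext
  have hrot : (extWord m k x).rotate (m * (k + 1)) = extWord m k x := by
    conv_lhs => rw [← hElen]
    exact List.rotate_length _
  rw [hrot] at hext
  funext j
  have h1 := extWord_getD m k hm ((phi m k)^[k + 1] x) j j.isLt
  have h2 := extWord_getD m k hm x j j.isLt
  rw [hext, h2] at h1
  simpa using h1.symm
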